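/- arXiv:1609.08483 — 4 statements merged into one kernel-verified Lean document; each statement's English description precedes it below -/
import Mathlib

section
/- Let d ≥ 3 be an integer. There exists a constant C > 0, depending only on d, such that for every smooth compactly supported function u : ℝ → ℝ and every r ∈ ℝ one has |u(r)|² ≤ C·⟨r⟩^{2−d}·∫_ℝ |u'(ρ)|²·⟨ρ⟩^{d−1} dρ, where ⟨r⟩ = (r²+1)^{1/2}. -/
open MeasureTheory Real Set Filter

private lemma arctan_le_self' {x : ℝ} (h : 0 ≤ x) : arctan x ≤ x := by
  nth_rewrite 2 [← tan_arctan x]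
  exact le_tan (by simpa using Real.arctan_strictMono.monotone h) (arctan_lt_pi_div_two x)

private lemma arctan_tail {r : ℝ} (hr : 0 ≤ r) :
    π / 2 - arctan r ≤ π * (r ^ 2 + 1) ^ (-(1:ℝ)/2) := by
  have hbase : (0:ℝ) < r ^ 2 + 1 := by positivity
  have hsq : (r ^ 2 + 1 : ℝ) ^ (-(1:ℝ)/2) = (Real.sqrt (r ^ 2 + 1))⁻¹ := by
    rw [show (-(1:ℝ)/2) = -(1/2) by ring, Real.rpow_neg hbase.le,
      ← Real.sqrt_eq_rpow]
  rw [hsq]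
  have hsqrt_pos : 0 < Real.sqrt (r ^ 2 + 1) := Real.sqrt_pos.2 hbase
  rcases le_total r 1 with h1 | h1
  · have h2 : Real.sqrt (r ^ 2 + 1) ≤ 2 := by
      rw [show (2:ℝ) = Real.sqrt 4 by
        rw [show (4:ℝ) = 2^2 by norm_num, Real.sqrt_sq (by norm_num)]]
      exact Real.sqrt_le_sqrt (by nlinarith)
    have harc : 0 ≤ arctan r := by simpa using Real.arctan_strictMono.monotone hr
    have : π / 2 ≤ π * (Real.sqrt (r ^ 2 + 1))⁻¹ := by
      rw [div_eq_mul_inv]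
      apply mul_le_mul_of_nonneg_left _ pi_pos.le
      rw [inv_le_inv₀ (by norm_num) hsqrt_pos]
      exact h2
    linarith
  · have hr0 : 0 < r := lt_of_lt_of_le one_pos h1
    have key : π / 2 - arctan r = arctan r⁻¹ := (arctan_inv_of_pos hr0).symm
    have h3 : arctan r⁻¹ ≤ r⁻¹ := arctan_le_self' (by positivity)
    have h4 : Real.sqrt (r ^ 2 + 1) ≤ π * r := by
      have : Real.sqrt (r ^ 2 + 1) ≤ Real.sqrt ((π * r)^2) := by
        apply Real.sqrt_le_sqrt
        nlinarith [pi_gt_three, sq_nonneg (π - 3), mul_le_mul_of_nonneg_left h1 hr0.le]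
      rwa [Real.sqrt_sq (by positivity)] at this
    have h5 : r⁻¹ ≤ π * (Real.sqrt (r ^ 2 + 1))⁻¹ := by
      rw [← div_eq_mul_inv, le_div_iff₀ hsqrt_pos, inv_mul_eq_div, div_le_iff₀ hr0]
      linarith
    linarith

private lemma weight_cont (c : ℝ) : Continuous fun ρ : ℝ => (ρ ^ 2 + 1) ^ c := by
  apply Continuous.rpow_const (by continuity)
  intro x; left; positivity

private lemma tail_integral {d : ℕ} (hd : 3 ≤ d) {r : ℝ} (hr : 0 ≤ r) :
    ∫ ρ in Ioi r, (ρ ^ 2 + 1) ^ (((1:ℝ) - d) / 2) ≤ π * (r ^ 2 + 1) ^ (((2:ℝ) - d) / 2) := by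
  have hd3 : (3:ℝ) ≤ d := by exact_mod_cast hd
  set c : ℝ := (r ^ 2 + 1) ^ (((3:ℝ) - d) / 2) with hc
  have hcpos : 0 < c := by apply Real.rpow_pos_of_pos; positivity
  have hbound : ∀ ρ ∈ Ioi r, (ρ ^ 2 + 1) ^ (((1:ℝ) - d) / 2) ≤ c * (1 + ρ ^ 2)⁻¹ := by
    intro ρ hρ
    have hρr : r ≤ ρ := le_of_lt hρ
    have hb1 : (0:ℝ) < r ^ 2 + 1 := by positivity
    have hb2 : (0:ℝ) < ρ ^ 2 + 1 := by positivity
    have hsplit : (ρ ^ 2 + 1) ^ (((1:ℝ) - d) / 2)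
        = (ρ ^ 2 + 1) ^ (((3:ℝ) - d) / 2) * (ρ ^ 2 + 1) ^ (-(1:ℝ)) := by
      rw [← Real.rpow_add hb2]; ring_nf
    rw [hsplit]
    have h1 : (ρ ^ 2 + 1) ^ (((3:ℝ) - d) / 2) ≤ c := by
      apply Real.rpow_le_rpow_of_nonpos hb1 (by nlinarith) (by linarith)
    have h2 : (ρ ^ 2 + 1) ^ (-(1:ℝ)) = (1 + ρ ^ 2)⁻¹ := by
      rw [Real.rpow_neg_one]; ring_nf
    rw [h2]
    exact mul_le_mul_of_nonneg_right h1 (by positivity)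
  have hint : IntegrableOn (fun ρ : ℝ => c * (1 + ρ ^ 2)⁻¹) (Ioi r) :=
    (integrable_inv_one_add_sq.const_mul c).integrableOn
  have hintL : IntegrableOn (fun ρ : ℝ => (ρ ^ 2 + 1) ^ (((1:ℝ) - d) / 2)) (Ioi r) := by
    apply Integrable.mono' hint ((weight_cont _).aestronglyMeasurable)
    filter_upwards [ae_restrict_mem measurableSet_Ioi] with ρ hρ
    rw [Real.norm_of_nonneg (by positivity)]
    exact hbound ρ hρ
  calc ∫ ρ in Ioi r, (ρ ^ 2 + 1) ^ (((1:ℝ) - d) / 2)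
      ≤ ∫ ρ in Ioi r, c * (1 + ρ ^ 2)⁻¹ := by
        apply setIntegral_mono_on hintL hint measurableSet_Ioi hbound
    _ = c * (π / 2 - arctan r) := by
        rw [MeasureTheory.integral_const_mul, integral_Ioi_inv_one_add_sq]
    _ ≤ c * (π * (r ^ 2 + 1) ^ (-(1:ℝ)/2)) :=
        mul_le_mul_of_nonneg_left (arctan_tail hr) hcpos.le
    _ = π * (r ^ 2 + 1) ^ (((2:ℝ) - d) / 2) := by
        rw [hc, mul_comm, mul_assoc, ← Real.rpow_add (by positivity)]
        ring_nf

private lemma strauss_core {d : ℕ} (hd : 3 ≤ d) {u : ℝ → ℝ} (hu : ContDiff ℝ (⊤ : ℕ∞) u)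
    (hc : HasCompactSupport u) {r : ℝ} (hr : 0 ≤ r) :
    |u r| ^ 2 ≤ π * (r ^ 2 + 1) ^ (((2 : ℝ) - (d : ℝ)) / 2) *
      ∫ ρ : ℝ, (deriv u ρ) ^ 2 * (ρ ^ 2 + 1) ^ (((d : ℝ) - 1) / 2) := by
  have hu' : Continuous (deriv u) := hu.continuous_deriv (by exact_mod_cast le_top)
  have hcs' : HasCompactSupport (deriv u) := hc.deriv
  -- the full-line integral of the weighted derivative
  set I : ℝ := ∫ ρ : ℝ, (deriv u ρ) ^ 2 * (ρ ^ 2 + 1) ^ (((d : ℝ) - 1) / 2) with hI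
  have hIcont : Continuous fun ρ : ℝ => (deriv u ρ) ^ 2 * (ρ ^ 2 + 1) ^ (((d : ℝ) - 1) / 2) :=
    (hu'.pow 2).mul (weight_cont _)
  have hIsupp : HasCompactSupport
      fun ρ : ℝ => (deriv u ρ) ^ 2 * (ρ ^ 2 + 1) ^ (((d : ℝ) - 1) / 2) :=
    HasCompactSupport.mul_right (hcs'.comp_left (g := fun t : ℝ => t ^ 2) (by simp))
  have hIint : Integrable fun ρ : ℝ => (deriv u ρ) ^ 2 * (ρ ^ 2 + 1) ^ (((d : ℝ) - 1) / 2) :=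
    hIcont.integrable_of_hasCompactSupport hIsupp
  -- FTC
  have hFTC : ∫ ρ in Ioi r, deriv u ρ = 0 - u r := by
    apply integral_Ioi_of_hasDerivAt_of_tendsto'
      (fun x _ => ((hu.differentiable (by simp)) x).hasDerivAt)
      (hu'.integrable_of_hasCompactSupport hcs').integrableOn
      (hc.is_zero_at_infty.mono_left _root_.atTop_le_cocompact)
  have habs : |u r| ≤ ∫ ρ in Ioi r, |deriv u ρ| := by
    have := norm_integral_le_integral_norm (μ := volume.restrict (Ioi r)) (deriv u)
    simp only [Real.norm_eq_abs] at this
    rw [hFTC, zero_sub, abs_neg] at this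
    exact this
  -- Cauchy–Schwarz
  set f : ℝ → ℝ := fun ρ => |deriv u ρ| * (ρ ^ 2 + 1) ^ (((d : ℝ) - 1) / 4) with hf
  set g : ℝ → ℝ := fun ρ => (ρ ^ 2 + 1) ^ (((1 : ℝ) - d) / 4) with hg
  have hfg : ∀ ρ, f ρ * g ρ = |deriv u ρ| := by
    intro ρ
    have : ((ρ:ℝ) ^ 2 + 1) ^ (((d : ℝ) - 1) / 4) * (ρ ^ 2 + 1) ^ (((1 : ℝ) - d) / 4) = 1 := by
      rw [← Real.rpow_add (by positivity),
        show ((d:ℝ) - 1) / 4 + ((1:ℝ) - d) / 4 = 0 by ring, Real.rpow_zero]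
    simp only [hf, hg]
    rw [mul_assoc, this, mul_one]
  have hfcont : Continuous f := (hu'.abs).mul (weight_cont _)
  have hfsupp : HasCompactSupport f :=
    HasCompactSupport.mul_right (hcs'.comp_left (g := fun t : ℝ => |t|) abs_zero)
  have hfmem : MemLp f (ENNReal.ofReal 2) (volume.restrict (Ioi r)) := by
    rw [show ENNReal.ofReal 2 = 2 by simp]
    exact (hfcont.memLp_of_hasCompactSupport (μ := volume) hfsupp).restrict _
  have hgsq_int : IntegrableOn (fun ρ : ℝ => (ρ ^ 2 + 1) ^ (((1:ℝ) - d) / 2)) (Ioi r) := by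
    apply Integrable.mono' integrable_inv_one_add_sq.integrableOn
      ((weight_cont _).aestronglyMeasurable)
    filter_upwards with ρ
    rw [Real.norm_of_nonneg (by positivity)]
    have h2 : ((ρ:ℝ) ^ 2 + 1) ^ (-(1:ℝ)) = (1 + ρ ^ 2)⁻¹ := by
      rw [Real.rpow_neg_one]; ring_nf
    rw [← h2]
    apply Real.rpow_le_rpow_of_exponent_le (by nlinarith)
    have : (3:ℝ) ≤ d := by exact_mod_cast hd
    linarith
  have hgsq : ∀ ρ : ℝ, g ρ ^ 2 = (ρ ^ 2 + 1) ^ (((1:ℝ) - d) / 2) := by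
    intro ρ
    rw [hg, ← Real.rpow_natCast (((ρ:ℝ) ^ 2 + 1) ^ (((1 : ℝ) - d) / 4)) 2,
      ← Real.rpow_mul (by positivity),
      show ((1:ℝ) - d) / 4 * ((2:ℕ):ℝ) = ((1:ℝ) - d) / 2 by push_cast; ring]
  have hgmem : MemLp g (ENNReal.ofReal 2) (volume.restrict (Ioi r)) := by
    rw [show ENNReal.ofReal 2 = 2 by simp]
    apply (memLp_two_iff_integrable_sq ((weight_cont _).aestronglyMeasurable.restrict)).2
    apply (hgsq_int.congr_fun (fun ρ _ => (hgsq ρ).symm) measurableSet_Ioi)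
  have hCS := integral_mul_le_Lp_mul_Lq_of_nonneg (μ := volume.restrict (Ioi r))
    (p := 2) (q := 2) Real.HolderConjugate.two_two
    (Eventually.of_forall fun ρ => by positivity)
    (Eventually.of_forall fun ρ => by positivity) hfmem hgmem
  -- identify the pieces
  set A : ℝ := ∫ ρ in Ioi r, (deriv u ρ) ^ 2 * (ρ ^ 2 + 1) ^ (((d : ℝ) - 1) / 2) with hA
  set B : ℝ := ∫ ρ in Ioi r, (ρ ^ 2 + 1) ^ (((1:ℝ) - d) / 2) with hB
  have hApt : ∀ ρ : ℝ, f ρ ^ (2:ℝ) = (deriv u ρ) ^ 2 * (ρ ^ 2 + 1) ^ (((d : ℝ) - 1) / 2) := by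
    intro ρ
    rw [show f ρ ^ (2:ℝ) = f ρ ^ (2:ℕ) by rw [← Real.rpow_natCast]; norm_num]
    rw [hf, mul_pow, sq_abs, ← Real.rpow_natCast (((ρ:ℝ) ^ 2 + 1) ^ (((d : ℝ) - 1) / 4)) 2,
      ← Real.rpow_mul (by positivity),
      show ((d:ℝ) - 1) / 4 * ((2:ℕ):ℝ) = ((d:ℝ) - 1) / 2 by push_cast; ring]
  have hBpt : ∀ ρ : ℝ, g ρ ^ (2:ℝ) = (ρ ^ 2 + 1) ^ (((1:ℝ) - d) / 2) := by
    intro ρ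
    rw [show g ρ ^ (2:ℝ) = g ρ ^ (2:ℕ) by rw [← Real.rpow_natCast]; norm_num]
    exact hgsq ρ
  have hCS2 : ∫ ρ in Ioi r, |deriv u ρ| ≤ A ^ ((1:ℝ)/2) * B ^ ((1:ℝ)/2) := by
    calc ∫ ρ in Ioi r, |deriv u ρ| = ∫ ρ in Ioi r, f ρ * g ρ := by
          exact integral_congr_ae (Eventually.of_forall fun ρ => (hfg ρ).symm)
      _ ≤ (∫ ρ in Ioi r, f ρ ^ (2:ℝ)) ^ ((1:ℝ)/2) * (∫ ρ in Ioi r, g ρ ^ (2:ℝ)) ^ ((1:ℝ)/2) := by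
          simpa using hCS
      _ = A ^ ((1:ℝ)/2) * B ^ ((1:ℝ)/2) := by
          rw [hA, hB]
          congr 1
          · congr 1; exact integral_congr_ae (Eventually.of_forall fun ρ => hApt ρ)
          · congr 1; exact integral_congr_ae (Eventually.of_forall fun ρ => hBpt ρ)
  have hAnn : 0 ≤ A := integral_nonneg fun ρ => by positivity
  have hBnn : 0 ≤ B := integral_nonneg fun ρ => by positivity
  have hsq : |u r| ^ 2 ≤ A * B := by
    have h0 : 0 ≤ ∫ ρ in Ioi r, |deriv u ρ| := integral_nonneg fun ρ => abs_nonneg _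
    calc |u r| ^ 2 ≤ (A ^ ((1:ℝ)/2) * B ^ ((1:ℝ)/2)) ^ 2 := by
          apply pow_le_pow_left₀ (abs_nonneg _) (le_trans habs hCS2)
      _ = A * B := by
          rw [mul_pow, ← Real.rpow_natCast (A ^ ((1:ℝ)/2)) 2, ← Real.rpow_natCast (B ^ ((1:ℝ)/2)) 2,
            ← Real.rpow_mul hAnn, ← Real.rpow_mul hBnn]
          norm_num
  have hAI : A ≤ I := setIntegral_le_integral hIint (Eventually.of_forall fun ρ => by positivity)
  have hBT : B ≤ π * (r ^ 2 + 1) ^ (((2:ℝ) - d) / 2) := tail_integral hd hr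
  calc |u r| ^ 2 ≤ A * B := hsq
    _ ≤ I * (π * (r ^ 2 + 1) ^ (((2:ℝ) - d) / 2)) := mul_le_mul hAI hBT hBnn (hAnn.trans hAI)
    _ = π * (r ^ 2 + 1) ^ (((2 : ℝ) - (d : ℝ)) / 2) * I := by ring

/-- Strauss estimate on the d-dimensional wormhole: for smooth compactly supported radial `u`,
`|u(r)|² ≤ C ⟨r⟩^{2−d} ∫ |u'|² ⟨ρ⟩^{d−1} dρ`, where `⟨r⟩ = (r²+1)^{1/2}`. -/
theorem stmt3 (d : ℕ) (hd : 3 ≤ d) :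
    ∃ C : ℝ, 0 < C ∧
      ∀ u : ℝ → ℝ, ContDiff ℝ (⊤ : ℕ∞) u → HasCompactSupport u → ∀ r : ℝ,
        |u r| ^ 2 ≤ C * (r ^ 2 + 1) ^ (((2 : ℝ) - (d : ℝ)) / 2) *
          ∫ ρ : ℝ, (deriv u ρ) ^ 2 * (ρ ^ 2 + 1) ^ (((d : ℝ) - 1) / 2) := by
  refine ⟨π, pi_pos, fun u hu hc r => ?_⟩
  rcases le_or_gt 0 r with hr | hr
  · exact strauss_core hd hu hc hr
  · -- reflect
    set v : ℝ → ℝ := fun ρ => u (-ρ) with hv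
    have hvc : ContDiff ℝ (⊤ : ℕ∞) v := hu.comp (contDiff_id.neg)
    have hvs : HasCompactSupport v := hc.comp_homeomorph (Homeomorph.neg ℝ)
    have key := strauss_core hd hvc hvs (r := -r) (by linarith)
    have hval : v (-r) = u r := by simp [hv]
    have hsq : (-r) ^ 2 = r ^ 2 := by ring
    have hint : (∫ ρ : ℝ, (deriv v ρ) ^ 2 * (ρ ^ 2 + 1) ^ (((d : ℝ) - 1) / 2))
        = ∫ ρ : ℝ, (deriv u ρ) ^ 2 * (ρ ^ 2 + 1) ^ (((d : ℝ) - 1) / 2) := by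
      have h1 : ∀ ρ : ℝ, (deriv v ρ) ^ 2 * (ρ ^ 2 + 1) ^ (((d : ℝ) - 1) / 2)
          = (deriv u (-ρ)) ^ 2 * ((-ρ) ^ 2 + 1) ^ (((d : ℝ) - 1) / 2) := by
        intro ρ
        rw [hv, deriv_comp_neg]
        ring_nf
      rw [integral_congr_ae (Filter.Eventually.of_forall h1)]
      exact integral_neg_eq_self (fun ρ : ℝ => (deriv u ρ) ^ 2 * (ρ ^ 2 + 1) ^ (((d : ℝ) - 1) / 2)) volume
    rw [hval, hsq, hint] at key
    exact key
end

section
/- Let d ≥ 3 be an integer. There exists a constant C > 0, depending only on d, such that for every smooth compactly supported function u : ℝ → ℝ one has ∫_ℝ |u(r)|²·⟨r⟩^{d−3} dr ≤ C·∫_ℝ |u'(r)|²·⟨r⟩^{d−1} dr, where ⟨r⟩ = (r²+1)^{1/2}. -/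
open MeasureTheory Real

/-- Hardy inequality on the d-dimensional wormhole: for smooth compactly supported radial `u`,
`∫ |u|² ⟨r⟩^{d−3} dr ≤ C ∫ |u'|² ⟨r⟩^{d−1} dr`, where `⟨r⟩ = (r²+1)^{1/2}`. -/
theorem stmt4 (d : ℕ) (hd : 3 ≤ d) :
    ∃ C : ℝ, 0 < C ∧
      ∀ u : ℝ → ℝ, ContDiff ℝ (⊤ : ℕ∞) u → HasCompactSupport u →
        (∫ r : ℝ, |u r| ^ 2 * (r ^ 2 + 1) ^ (((d : ℝ) - 3) / 2)) ≤
          C * ∫ r : ℝ, (deriv u r) ^ 2 * (r ^ 2 + 1) ^ (((d : ℝ) - 1) / 2) := by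
  refine ⟨4, by norm_num, fun u hu hsupp => ?_⟩
  set c : ℝ := ((d : ℝ) - 3) / 2 with hc_def
  have hc : 0 ≤ c := by
    have : (3 : ℝ) ≤ (d : ℝ) := by exact_mod_cast hd
    rw [hc_def]; linarith
  have he : ((d : ℝ) - 1) / 2 = c + 1 := by rw [hc_def]; ring
  have hpos : ∀ r : ℝ, (0 : ℝ) < r ^ 2 + 1 := fun r => by positivity
  -- basic continuity facts
  have hbase : ContDiff ℝ (⊤ : ℕ∞) (fun r : ℝ => r ^ 2 + 1) := by fun_prop
  have hxc : ∀ p : ℝ, Continuous fun r : ℝ => (r ^ 2 + 1) ^ p := fun p =>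
    (hbase.continuous).rpow_const (fun x => Or.inl (hpos x).ne')
  have hu' : Continuous (deriv u) := hu.continuous_deriv (by exact_mod_cast le_top)
  -- the auxiliary function g and its derivative
  set g : ℝ → ℝ := fun r => r * (r ^ 2 + 1) ^ c with hg_def
  set φ : ℝ → ℝ := fun r =>
    1 * (r ^ 2 + 1) ^ c + r * (2 * r * c * (r ^ 2 + 1) ^ (c - 1)) with hφ_def
  have hbase' : ∀ r : ℝ, HasDerivAt (fun r : ℝ => r ^ 2 + 1) (2 * r) r := fun r => by
    simpa using (hasDerivAt_pow 2 r).add_const 1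
  have hxder : ∀ r : ℝ, HasDerivAt (fun r : ℝ => (r ^ 2 + 1) ^ c)
      (2 * r * c * (r ^ 2 + 1) ^ (c - 1)) r := fun r =>
    (hbase' r).rpow_const (Or.inl (hpos r).ne')
  have hgder : ∀ r : ℝ, HasDerivAt g (φ r) r := fun r =>
    (hasDerivAt_id r).mul (hxder r)
  have hgc : ContDiff ℝ (⊤ : ℕ∞) g :=
    contDiff_id.mul (hbase.rpow_const_of_ne (fun x => (hpos x).ne'))
  -- F = u² g, its derivative
  set F : ℝ → ℝ := fun r => u r ^ 2 * g r with hF_def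
  have hFder : ∀ r : ℝ, HasDerivAt F
      (2 * u r ^ 1 * deriv u r * g r + u r ^ 2 * φ r) r := fun r =>
    (((hu.differentiable (by simp) r).hasDerivAt.pow 2)).mul (hgder r)
  have hFc : ContDiff ℝ (⊤ : ℕ∞) F := (hu.pow 2).mul hgc
  have hFsupp : HasCompactSupport F := by
    have hFeq : F = fun r => u r * (u r * g r) := by funext r; rw [hF_def]; ring
    rw [hFeq]; exact hsupp.mul_right
  have hderivF : deriv F = fun r => 2 * u r ^ 1 * deriv u r * g r + u r ^ 2 * φ r := by
    funext r; exact (hFder r).deriv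
  -- ∫ deriv F = 0
  have hdFint : Integrable (deriv F) :=
    ((hFc.continuous_deriv (by exact_mod_cast le_top))).integrable_of_hasCompactSupport hFsupp.deriv
  have hzero : (∫ r : ℝ, deriv F r) = 0 := by
    have h1 := HasCompactSupport.integral_Iic_deriv_eq (hFc.of_le (by exact_mod_cast le_top)) hFsupp 0
    have h2 := HasCompactSupport.integral_Ioi_deriv_eq (hFc.of_le (by exact_mod_cast le_top)) hFsupp 0
    rw [← intervalIntegral.integral_Iic_add_Ioi hdFint.integrableOn hdFint.integrableOn, h1, h2]
    ring
  -- integrands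
  set A : ℝ → ℝ := fun r => u r ^ 2 * (r ^ 2 + 1) ^ c with hA_def
  set B : ℝ → ℝ := fun r => u r ^ 2 * φ r with hB_def
  set T : ℝ → ℝ := fun r => 2 * u r ^ 1 * deriv u r * g r with hT_def
  set D : ℝ → ℝ := fun r => deriv u r ^ 2 * (r ^ 2 + 1) ^ (c + 1) with hD_def
  -- integrability
  have hintA : Integrable A :=
    ((hu.continuous.pow 2).mul (hxc c)).integrable_of_hasCompactSupport (hsupp.mono fun x hx => by
      simp only [Function.mem_support] at hx ⊢
      intro h; exact hx (by simp [h]))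
  have hφcont : Continuous φ := by
    rw [hφ_def]
    exact ((continuous_const.mul (hxc c))).add
      (continuous_id.mul (((continuous_const.mul continuous_id).mul continuous_const).mul
        (hxc (c - 1))))
  have hintB : Integrable B :=
    ((hu.continuous.pow 2).mul hφcont).integrable_of_hasCompactSupport (hsupp.mono fun x hx => by
      simp only [Function.mem_support] at hx ⊢
      intro h; exact hx (by simp [h]))
  have hintT : Integrable T :=
    ((((continuous_const.mul (hu.continuous.pow 1)).mul hu').mul
      (hgc.continuous))).integrable_of_hasCompactSupport (hsupp.mono fun x hx => by
      simp only [Function.mem_support] at hx ⊢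
      intro h; exact hx (by simp [h]))
  have hintD : Integrable D :=
    ((hu'.pow 2).mul (hxc (c + 1))).integrable_of_hasCompactSupport (hsupp.deriv.mono fun x hx => by
      simp only [Function.mem_support] at hx ⊢
      intro h; exact hx (by simp [h]))
  -- ∫ T + ∫ B = 0
  have hsplit : (∫ r : ℝ, T r) + (∫ r : ℝ, B r) = 0 := by
    rw [← integral_add hintT hintB]
    rw [hderivF] at hzero
    exact hzero
  -- pointwise: A ≤ B
  have hAB : ∀ r : ℝ, A r ≤ B r := by
    intro r
    have hy : (0 : ℝ) ≤ (r ^ 2 + 1) ^ (c - 1) := (rpow_nonneg (hpos r).le _)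
    have key : 0 ≤ u r ^ 2 * (r * (2 * r * c * (r ^ 2 + 1) ^ (c - 1))) := by
      have h' : r * (2 * r * c * (r ^ 2 + 1) ^ (c - 1))
          = 2 * c * (r ^ 2 + 1) ^ (c - 1) * r ^ 2 := by ring
      rw [h']; positivity
    show u r ^ 2 * (r ^ 2 + 1) ^ c ≤
      u r ^ 2 * (1 * (r ^ 2 + 1) ^ c + r * (2 * r * c * (r ^ 2 + 1) ^ (c - 1)))
    nlinarith [key]
  -- pointwise: -T ≤ (1/2) A + 2 D
  have hTbound : ∀ r : ℝ, -T r ≤ (1 / 2) * A r + 2 * D r := by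
    intro r
    have hx : (0 : ℝ) < (r ^ 2 + 1) ^ c := rpow_pos_of_pos (hpos r) _
    have hxe : ((r : ℝ) ^ 2 + 1) ^ (c + 1) = (r ^ 2 + 1) ^ c * (r ^ 2 + 1) := by
      rw [rpow_add (hpos r), rpow_one]
    show -(2 * u r ^ 1 * deriv u r * (r * (r ^ 2 + 1) ^ c)) ≤
      1 / 2 * (u r ^ 2 * (r ^ 2 + 1) ^ c) + 2 * (deriv u r ^ 2 * (r ^ 2 + 1) ^ (c + 1))
    rw [hxe]
    have h1 : 0 ≤ (r ^ 2 + 1) ^ c * (u r + 2 * deriv u r * r) ^ 2 :=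
      mul_nonneg hx.le (sq_nonneg _)
    have h2 : 0 ≤ (r ^ 2 + 1) ^ c * deriv u r ^ 2 := mul_nonneg hx.le (sq_nonneg _)
    nlinarith [h1, h2]
  -- combine
  have hIAB : (∫ r : ℝ, A r) ≤ ∫ r : ℝ, B r := integral_mono hintA hintB hAB
  have hIB : (∫ r : ℝ, B r) = - ∫ r : ℝ, T r := by linarith
  have hIT : (- ∫ r : ℝ, T r) ≤ (1 / 2) * (∫ r : ℝ, A r) + 2 * ∫ r : ℝ, D r := by
    rw [← integral_neg]
    calc (∫ r : ℝ, -T r) ≤ ∫ r : ℝ, ((1 / 2) * A r + 2 * D r) :=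
          integral_mono hintT.neg ((hintA.const_mul _).add (hintD.const_mul _)) hTbound
      _ = (1 / 2) * (∫ r : ℝ, A r) + 2 * ∫ r : ℝ, D r := by
          rw [integral_add (hintA.const_mul _) (hintD.const_mul _),
            integral_const_mul, integral_const_mul]
  have hfinal : (∫ r : ℝ, A r) ≤ 4 * ∫ r : ℝ, D r := by linarith
  have hLHS : (∫ r : ℝ, |u r| ^ 2 * (r ^ 2 + 1) ^ (((d : ℝ) - 3) / 2)) = ∫ r : ℝ, A r := by
    simp only [hA_def, sq_abs, hc_def]
  have hRHS : (∫ r : ℝ, (deriv u r) ^ 2 * (r ^ 2 + 1) ^ (((d : ℝ) - 1) / 2))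
      = ∫ r : ℝ, D r := by
    simp only [hD_def, he]
  rw [hLHS, hRHS]
  exact hfinal
end

section
/- Let ℓ ≥ 1 be an integer and set d = 2ℓ+3. There exist constants c, C > 0, depending only on ℓ, such that for every smooth compactly supported function u : ℝ → ℝ, writing φ(r) = ⟨r⟩^ℓ·u(r), one has c·∫_ℝ |φ'(r)|²·⟨r⟩² dr ≤ ∫_ℝ |u'(r)|²·⟨r⟩^{d−1} dr ≤ C·∫_ℝ |φ'(r)|²·⟨r⟩² dr, where ⟨r⟩ = (r²+1)^{1/2}. -/
open MeasureTheory Real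

set_option maxHeartbeats 1000000 in
/-- Equivalence of the energy norm of `φ = ⟨r⟩^ℓ u` on the 3-dimensional wormhole
(weight `⟨r⟩² dr = (r²+1) dr`) with the `Ḣ¹` norm of `u` on the `d = 2ℓ+3`-dimensional
wormhole (weight `⟨r⟩^{d−1} dr = (r²+1)^{ℓ+1} dr`). -/
theorem stmt5 (ℓ : ℕ) (hℓ : 1 ≤ ℓ) :
    ∃ c C : ℝ, 0 < c ∧ 0 < C ∧
      ∀ u : ℝ → ℝ, ContDiff ℝ (⊤ : ℕ∞) u → HasCompactSupport u →
        (c * ∫ r : ℝ,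
            (deriv (fun s : ℝ => (s ^ 2 + 1) ^ ((ℓ : ℝ) / 2) * u s) r) ^ 2 * (r ^ 2 + 1))
          ≤ (∫ r : ℝ, (deriv u r) ^ 2 * (r ^ 2 + 1) ^ (ℓ + 1)) ∧
        (∫ r : ℝ, (deriv u r) ^ 2 * (r ^ 2 + 1) ^ (ℓ + 1))
          ≤ C * ∫ r : ℝ,
              (deriv (fun s : ℝ => (s ^ 2 + 1) ^ ((ℓ : ℝ) / 2) * u s) r) ^ 2 * (r ^ 2 + 1) := by
  obtain ⟨k, rfl⟩ : ∃ k, ℓ = k + 1 := ⟨ℓ - 1, (Nat.succ_pred_eq_of_pos hℓ).symm⟩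
  set L : ℝ := ((k + 1 : ℕ) : ℝ) with hL_def
  have hL : (1:ℝ) ≤ L := by simp [hL_def]
  have hL0 : (0:ℝ) ≤ L := le_trans zero_le_one hL
  refine ⟨1, 1 + 4*L + 4*L^2, one_pos, by positivity, ?_⟩
  intro u hu hsupp
  have hp : ∀ s : ℝ, (0:ℝ) < s ^ 2 + 1 := fun s => by positivity
  set φ : ℝ → ℝ := fun s : ℝ => (s ^ 2 + 1) ^ (L / 2) * u s with hφ_def
  -- derivative of the weight
  have hw : ∀ s : ℝ, HasDerivAt (fun s : ℝ => (s ^ 2 + 1) ^ (L / 2))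
      (L * s * (s ^ 2 + 1) ^ (L / 2 - 1)) s := by
    intro s
    have h1 : HasDerivAt (fun s : ℝ => s ^ 2 + 1) (2 * s) s := by
      simpa using ((hasDerivAt_pow 2 s).add_const 1)
    have h2 := h1.rpow_const (p := L / 2) (Or.inl (hp s).ne')
    convert h2 using 1
    ring
  have hu' : ∀ s : ℝ, HasDerivAt u (deriv u s) s :=
    fun s => ((hu.differentiable (by simp)) s).hasDerivAt
  have hφ : ∀ s : ℝ, HasDerivAt φ
      (L * s * (s ^ 2 + 1) ^ (L / 2 - 1) * u s + (s ^ 2 + 1) ^ (L / 2) * deriv u s) s :=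
    fun s => (hw s).mul (hu' s)
  have hderivφ : ∀ s : ℝ, deriv φ s
      = L * s * (s ^ 2 + 1) ^ (L / 2 - 1) * u s + (s ^ 2 + 1) ^ (L / 2) * deriv u s :=
    fun s => (hφ s).deriv
  have hφd : ∀ s : ℝ, HasDerivAt φ (deriv φ s) s := fun s => by
    rw [hderivφ s]; exact hφ s
  -- rpow identities
  have e1 : ∀ s : ℝ, ((s ^ 2 + 1) ^ (L / 2)) ^ 2 = (s ^ 2 + 1) ^ (k + 1) := by
    intro s
    rw [← Real.rpow_natCast (s ^ 2 + 1) (k + 1),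
      ← Real.rpow_natCast ((s ^ 2 + 1) ^ (L / 2)) 2, ← Real.rpow_mul (hp s).le, hL_def]
    norm_num
  have e2 : ∀ s : ℝ, (s ^ 2 + 1) ^ (L / 2) * (s ^ 2 + 1) ^ (L / 2 - 1) * (s ^ 2 + 1)
      = (s ^ 2 + 1) ^ (k + 1) := by
    intro s
    have h1 : (s ^ 2 + 1 : ℝ) ^ (L / 2) * (s ^ 2 + 1) ^ (L / 2 - 1) * (s ^ 2 + 1)
        = (s ^ 2 + 1) ^ (L / 2 + (L / 2 - 1) + 1) := by
      rw [Real.rpow_add (hp s), Real.rpow_add (hp s), Real.rpow_one]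
    have h2 : L / 2 + (L / 2 - 1) + 1 = ((k + 1 : ℕ) : ℝ) := by rw [← hL_def]; ring
    rw [h1, h2, Real.rpow_natCast]
  have e3 : ∀ s : ℝ, ((s ^ 2 + 1) ^ (L / 2 - 1)) ^ 2 * (s ^ 2 + 1) = (s ^ 2 + 1) ^ k := by
    intro s
    have h1 : ((s ^ 2 + 1 : ℝ) ^ (L / 2 - 1)) ^ 2 = (s ^ 2 + 1) ^ ((L / 2 - 1) * 2) := by
      rw [← Real.rpow_natCast ((s ^ 2 + 1) ^ (L / 2 - 1)) 2, ← Real.rpow_mul (hp s).le]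
      norm_num
    have h2 : (s ^ 2 + 1 : ℝ) ^ ((L / 2 - 1) * 2) * (s ^ 2 + 1)
        = (s ^ 2 + 1) ^ ((L / 2 - 1) * 2 + 1) := by
      rw [Real.rpow_add (hp s), Real.rpow_one]
    have h3 : (L / 2 - 1) * 2 + 1 = ((k : ℕ) : ℝ) := by
      rw [hL_def]; push_cast; ring
    rw [h1, h2, h3, Real.rpow_natCast]
  -- continuity
  have hcu : Continuous u := hu.continuous
  have hcu' : Continuous (deriv u) := hu.continuous_deriv (by exact_mod_cast le_top)
  have hcw : Continuous (fun s : ℝ => (s ^ 2 + 1) ^ (L / 2)) :=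
    (by fun_prop : Continuous fun s : ℝ => s ^ 2 + 1).rpow_const fun s => Or.inl (hp s).ne'
  have hcw' : Continuous (fun s : ℝ => (s ^ 2 + 1) ^ (L / 2 - 1)) :=
    (by fun_prop : Continuous fun s : ℝ => s ^ 2 + 1).rpow_const fun s => Or.inl (hp s).ne'
  have hcφ : Continuous φ := hcw.mul hcu
  have hcφ' : Continuous (deriv φ) := by
    rw [funext hderivφ]
    exact (((continuous_const.mul continuous_id).mul hcw').mul hcu).add (hcw.mul hcu')
  -- compact support
  have hsφ : HasCompactSupport φ := hsupp.mul_left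
  have hsφ' : HasCompactSupport (deriv φ) := hsφ.deriv
  have hsu' : HasCompactSupport (deriv u) := hsupp.deriv
  have hsu2 : HasCompactSupport (fun r : ℝ => (u r) ^ 2) :=
    hsupp.comp_left (g := fun t : ℝ => t ^ 2) (by simp)
  have hsφ2 : HasCompactSupport (fun r : ℝ => (φ r) ^ 2) :=
    hsφ.comp_left (g := fun t : ℝ => t ^ 2) (by simp)
  have hsφ'2 : HasCompactSupport (fun r : ℝ => (deriv φ r) ^ 2) :=
    hsφ'.comp_left (g := fun t : ℝ => t ^ 2) (by simp)
  have hsu'2 : HasCompactSupport (fun r : ℝ => (deriv u r) ^ 2) :=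
    hsu'.comp_left (g := fun t : ℝ => t ^ 2) (by simp)
  -- the potential term
  set V : ℝ → ℝ := fun r => (L * (r ^ 2 + 1) ^ (k + 1) + L ^ 2 * r ^ 2 * (r ^ 2 + 1) ^ k)
      * (u r) ^ 2 with hV_def
  -- the boundary term G and its derivative
  set G : ℝ → ℝ := fun r => L * r * (r ^ 2 + 1) ^ (k + 1) * (u r) ^ 2 with hG_def
  set G' : ℝ → ℝ := fun r =>
    (L * (r ^ 2 + 1) ^ (k + 1) + 2 * L * L * r ^ 2 * (r ^ 2 + 1) ^ k) * (u r) ^ 2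
      + 2 * L * r * (r ^ 2 + 1) ^ (k + 1) * u r * deriv u r with hG'_def
  have hq : ∀ r : ℝ, HasDerivAt (fun r : ℝ => (r ^ 2 + 1) ^ (k + 1))
      (L * (r ^ 2 + 1) ^ k * (2 * r)) r := by
    intro r
    have h1 : HasDerivAt (fun s : ℝ => s ^ 2 + 1) (2 * r) r := by
      simpa using ((hasDerivAt_pow 2 r).add_const 1)
    have h2 := h1.fun_pow (k + 1)
    simpa [hL_def] using h2
  have hG : ∀ r : ℝ, HasDerivAt G (G' r) r := by
    intro r
    have h1 : HasDerivAt (fun r : ℝ => L * r) L r := by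
      simpa using (hasDerivAt_id r).const_mul L
    have h2 := (h1.fun_mul (hq r)).fun_mul ((hu' r).fun_pow 2)
    refine h2.congr_deriv ?_
    simp only [hG'_def]
    ring
  have hH : ∀ r : ℝ, HasDerivAt (fun r : ℝ => r * (φ r) ^ 2)
      ((φ r) ^ 2 + 2 * r * φ r * deriv φ r) r := by
    intro r
    have h2 := (hasDerivAt_id r).fun_mul ((hφd r).fun_pow 2)
    refine h2.congr_deriv ?_
    simp only [id_eq, pow_one]
    ring
  -- integrability
  have intA : Integrable (fun r : ℝ => (deriv φ r) ^ 2 * (r ^ 2 + 1)) :=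
    ((hcφ'.pow 2).mul (by fun_prop)).integrable_of_hasCompactSupport hsφ'2.mul_right
  have intB : Integrable (fun r : ℝ => (deriv u r) ^ 2 * (r ^ 2 + 1) ^ (k + 1 + 1)) :=
    ((hcu'.pow 2).mul (by fun_prop)).integrable_of_hasCompactSupport hsu'2.mul_right
  have intV : Integrable V :=
    ((by fun_prop : Continuous fun r : ℝ =>
        L * (r ^ 2 + 1) ^ (k + 1) + L ^ 2 * r ^ 2 * (r ^ 2 + 1) ^ k).mul
      (hcu.pow 2)).integrable_of_hasCompactSupport hsu2.mul_left
  have intG : Integrable G :=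
    ((by fun_prop : Continuous fun r : ℝ =>
        L * r * (r ^ 2 + 1) ^ (k + 1)).mul
      (hcu.pow 2)).integrable_of_hasCompactSupport hsu2.mul_left
  have intG' : Integrable G' := by
    apply Continuous.integrable_of_hasCompactSupport
    · exact ((by fun_prop : Continuous fun r : ℝ =>
        L * (r ^ 2 + 1) ^ (k + 1) + 2 * L * L * r ^ 2 * (r ^ 2 + 1) ^ k).mul
          (hcu.pow 2)).add
        (((by fun_prop : Continuous fun r : ℝ =>
          2 * L * r * (r ^ 2 + 1) ^ (k + 1)).mul hcu).mul hcu')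
    · exact (hsu2.mul_left).add (hsu'.mul_left)
  have intφ2 : Integrable (fun r : ℝ => (φ r) ^ 2) :=
    (hcφ.pow 2).integrable_of_hasCompactSupport hsφ2
  have intH : Integrable (fun r : ℝ => r * (φ r) ^ 2) :=
    (continuous_id.mul (hcφ.pow 2)).integrable_of_hasCompactSupport hsφ2.mul_left
  have intH' : Integrable (fun r : ℝ => (φ r) ^ 2 + 2 * r * φ r * deriv φ r) := by
    apply Continuous.integrable_of_hasCompactSupport
    · exact (hcφ.pow 2).add
        (((by fun_prop : Continuous fun r : ℝ => 2 * r).mul hcφ).mul hcφ')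
    · exact hsφ2.add (hsφ'.mul_left)
  have intcross : Integrable (fun r : ℝ => -(2 * r * φ r * deriv φ r)) := by
    apply Continuous.integrable_of_hasCompactSupport
    · exact (((by fun_prop : Continuous fun r : ℝ => 2 * r).mul hcφ).mul hcφ').neg
    · exact (hsφ'.mul_left : HasCompactSupport fun r : ℝ => 2 * r * φ r * deriv φ r).comp_left
        (g := fun t : ℝ => -t) (by simp)
  have intS : Integrable (fun r : ℝ => r ^ 2 * (deriv φ r) ^ 2) :=
    ((by fun_prop : Continuous fun r : ℝ => r ^ 2).mul
      (hcφ'.pow 2)).integrable_of_hasCompactSupport hsφ'2.mul_left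
  -- boundary terms vanish
  have hGzero : ∫ r : ℝ, G' r = 0 :=
    integral_eq_zero_of_hasDerivAt_of_integrable hG intG' intG
  have hHzero : ∫ r : ℝ, ((φ r) ^ 2 + 2 * r * φ r * deriv φ r) = 0 :=
    integral_eq_zero_of_hasDerivAt_of_integrable hH intH' intH
  -- key pointwise identity
  have key : ∀ r : ℝ, (deriv u r) ^ 2 * (r ^ 2 + 1) ^ (k + 1 + 1)
      = ((deriv φ r) ^ 2 * (r ^ 2 + 1) + V r) - G' r := by
    intro r
    rw [hderivφ r]
    simp only [hV_def, hG'_def]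
    have E1 := e1 r; have E2 := e2 r; have E3 := e3 r
    have hps : (r ^ 2 + 1 : ℝ) ^ (k + 1 + 1) = (r ^ 2 + 1) ^ (k + 1) * (r ^ 2 + 1) :=
      pow_succ _ _
    have hps2 : (r ^ 2 + 1 : ℝ) ^ (k + 1) = (r ^ 2 + 1) ^ k * (r ^ 2 + 1) :=
      pow_succ _ _
    linear_combination (-(L ^ 2 * r ^ 2 * (u r) ^ 2)) * E3
      + (-(2 * L * r * u r * deriv u r)) * E2 + (-((deriv u r) ^ 2 * (r ^ 2 + 1))) * E1
  -- split the d-dimensional energy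
  have intAV : Integrable (fun r : ℝ => (deriv φ r) ^ 2 * (r ^ 2 + 1) + V r) := intA.add intV
  have hBeq : (∫ r : ℝ, (deriv u r) ^ 2 * (r ^ 2 + 1) ^ (k + 1 + 1))
      = (∫ r : ℝ, (deriv φ r) ^ 2 * (r ^ 2 + 1)) + ∫ r : ℝ, V r := by
    rw [show (fun r : ℝ => (deriv u r) ^ 2 * (r ^ 2 + 1) ^ (k + 1 + 1))
        = fun r => ((deriv φ r) ^ 2 * (r ^ 2 + 1) + V r) - G' r from funext key,
      integral_sub intAV intG', integral_add intA intV, hGzero, sub_zero]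
  have hPnn : (0:ℝ) ≤ ∫ r : ℝ, V r := by
    apply integral_nonneg
    intro r
    have h1 : (0:ℝ) ≤ (r ^ 2 + 1) ^ (k + 1) := (pow_pos (hp r) _).le
    have h2 : (0:ℝ) ≤ (r ^ 2 + 1) ^ k := (pow_pos (hp r) _).le
    show (0:ℝ) ≤ (L * (r ^ 2 + 1) ^ (k + 1) + L ^ 2 * r ^ 2 * (r ^ 2 + 1) ^ k) * u r ^ 2
    exact mul_nonneg (add_nonneg (mul_nonneg hL0 h1)
      (mul_nonneg (mul_nonneg (sq_nonneg L) (sq_nonneg r)) h2)) (sq_nonneg (u r))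
  have hAnn : (0:ℝ) ≤ ∫ r : ℝ, (deriv φ r) ^ 2 * (r ^ 2 + 1) := by
    apply integral_nonneg
    intro r
    show (0:ℝ) ≤ (deriv φ r) ^ 2 * (r ^ 2 + 1)
    exact mul_nonneg (sq_nonneg _) (hp r).le
  -- Hardy inequality : ∫ φ² ≤ 4 ∫ (deriv φ)² (r²+1)
  have hQeq : (∫ r : ℝ, (φ r) ^ 2) = ∫ r : ℝ, -(2 * r * φ r * deriv φ r) := by
    have : (fun r : ℝ => (φ r) ^ 2)
        = fun r => ((φ r) ^ 2 + 2 * r * φ r * deriv φ r) + -(2 * r * φ r * deriv φ r) := by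
      funext r; ring
    rw [this, integral_add intH' intcross, hHzero, zero_add]
  have hmono : (∫ r : ℝ, -(2 * r * φ r * deriv φ r))
      ≤ ∫ r : ℝ, (2 * (r ^ 2 * (deriv φ r) ^ 2) + (1/2) * (φ r) ^ 2) := by
    apply integral_mono intcross ((intS.const_mul 2).add (intφ2.const_mul (1/2)))
    intro r
    simp only [Pi.add_apply]
    nlinarith [sq_nonneg (2 * r * deriv φ r + φ r)]
  have hsplit : (∫ r : ℝ, (2 * (r ^ 2 * (deriv φ r) ^ 2) + (1/2) * (φ r) ^ 2))
      = 2 * (∫ r : ℝ, r ^ 2 * (deriv φ r) ^ 2) + (1/2) * ∫ r : ℝ, (φ r) ^ 2 := by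
    rw [integral_add (intS.const_mul 2) (intφ2.const_mul (1/2)),
      integral_const_mul, integral_const_mul]
  have hSA : (∫ r : ℝ, r ^ 2 * (deriv φ r) ^ 2)
      ≤ ∫ r : ℝ, (deriv φ r) ^ 2 * (r ^ 2 + 1) := by
    apply integral_mono intS intA
    intro r
    show r ^ 2 * (deriv φ r) ^ 2 ≤ (deriv φ r) ^ 2 * (r ^ 2 + 1)
    nlinarith [sq_nonneg (deriv φ r)]
  have hardy : (∫ r : ℝ, (φ r) ^ 2) ≤ 4 * ∫ r : ℝ, (deriv φ r) ^ 2 * (r ^ 2 + 1) := by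
    have h := hQeq ▸ hmono
    rw [hsplit] at h
    linarith
  -- potential bound : ∫ V ≤ (L + L²) ∫ φ²
  have hPQ : (∫ r : ℝ, V r) ≤ (L + L ^ 2) * ∫ r : ℝ, (φ r) ^ 2 := by
    rw [← integral_const_mul]
    apply integral_mono intV (intφ2.const_mul _)
    intro r
    show V r ≤ (L + L ^ 2) * (φ r) ^ 2
    simp only [hV_def, hφ_def]
    have E1 := e1 r
    have hps2 : (r ^ 2 + 1 : ℝ) ^ (k + 1) = (r ^ 2 + 1) ^ k * (r ^ 2 + 1) :=
      pow_succ _ _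
    have h2 : (0:ℝ) ≤ (r ^ 2 + 1) ^ k := (pow_pos (hp r) _).le
    rw [mul_pow, E1, hps2]
    nlinarith [sq_nonneg (u r), sq_nonneg L, mul_nonneg (mul_nonneg (sq_nonneg L) h2) (sq_nonneg (u r))]
  have hQnn : (0:ℝ) ≤ ∫ r : ℝ, (φ r) ^ 2 :=
    integral_nonneg fun r => sq_nonneg _
  constructor
  · rw [one_mul, hBeq]
    linarith
  · rw [hBeq]
    nlinarith [hardy, hPQ, hQnn, hAnn, hL0, mul_le_mul_of_nonneg_left hardy (by positivity : (0:ℝ) ≤ L + L ^ 2)]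
end

section
/- Let d ≥ 7 be an integer, and set m₀ = 3d/(2d−5) and m₁ = d/(d−3). There exists a constant C > 0, depending only on d, such that for every smooth compactly supported function f : ℝ → ℝ and every r ∈ ℝ one has |f(r)| ≤ C·⟨r⟩^{−2(d−4)/3}·( ∫_ℝ |f'(ρ)|^{m₀}·⟨ρ⟩^{d−1} dρ )^{1/m₀} and |f(r)| ≤ C·⟨r⟩^{−(d−4)}·( ∫_ℝ |f'(ρ)|^{m₁}·⟨ρ⟩^{d−1} dρ )^{1/m₁}, where ⟨r⟩ = (r²+1)^{1/2}. -/
open MeasureTheory Real Set Filter Topology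

private lemma ptwise {a : ℝ} (ha : 0 < a) {x : ℝ} (hx : 0 ≤ x) :
    (x ^ 2 + 1) ^ (-(a/2)) ≤ 2 ^ (a/2) * (1 + x) ^ (-a) := by
  have h1x : (0:ℝ) < 1 + x := by linarith
  have hsq : ((1+x)^2 : ℝ) ^ (-(a/2)) = (1+x) ^ (-a) := by
    rw [← Real.rpow_two, ← Real.rpow_mul h1x.le]
    congr 1; ring
  have hrhs : (((1+x)^2/2 : ℝ)) ^ (-(a/2)) = 2 ^ (a/2) * (1 + x) ^ (-a) := by
    rw [Real.div_rpow (by positivity) (by norm_num), hsq, Real.rpow_neg (by norm_num : (0:ℝ) ≤ 2)]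
    rw [div_eq_mul_inv, mul_comm, inv_inv]
  rw [← hrhs]
  exact Real.rpow_le_rpow_of_nonpos (by positivity) (by nlinarith [sq_nonneg (x-1)]) (by linarith)

private lemma tail_bound {a r : ℝ} (ha : 1 < a) (hr : 0 ≤ r) :
    IntegrableOn (fun ρ : ℝ => (ρ ^ 2 + 1) ^ (-(a/2))) (Ioi r) ∧
      ∫ ρ in Ioi r, (ρ ^ 2 + 1) ^ (-(a/2)) ≤ (2 ^ (a/2) / (a-1)) * (r ^ 2 + 1) ^ ((1-a)/2) := by
  have ha1 : (0:ℝ) < a - 1 := by linarith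
  set K : ℝ := 2 ^ (a/2) with hK
  have hKpos : 0 < K := by positivity
  set g : ℝ → ℝ := fun x => -(K/(a-1)) * (1+x) ^ (1-a) with hg
  have hderiv : ∀ x ∈ Ici r, HasDerivAt g (K * (1+x) ^ (-a)) x := by
    intro x hx
    have h1x : (0:ℝ) < 1 + x := by simp only [mem_Ici] at hx; linarith
    have h1 : HasDerivAt (fun y : ℝ => 1 + y) 1 x := (hasDerivAt_id x).const_add 1
    have h2 : HasDerivAt (fun y : ℝ => (1+y) ^ (1-a))
        ((1-a) * (1+x) ^ (1-a-1) * 1) x :=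
      (Real.hasDerivAt_rpow_const (Or.inl h1x.ne')).comp x h1
    have h3 := h2.const_mul (-(K/(a-1)))
    refine h3.congr_deriv ?_
    have : 1 - a - 1 = -a := by ring
    rw [this]
    field_simp
    ring
  have htend : Tendsto g atTop (𝓝 0) := by
    have h1 : Tendsto (fun x : ℝ => (1+x)) atTop atTop :=
      tendsto_atTop_add_const_left atTop 1 tendsto_id
    have h2 : Tendsto (fun x : ℝ => (1+x) ^ (1-a)) atTop (𝓝 0) := by
      have := (tendsto_rpow_neg_atTop ha1).comp h1
      simpa [Function.comp_def, neg_sub] using this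
    have h3 := h2.const_mul (-(K/(a-1)))
    rw [mul_zero] at h3
    exact h3
  have hnonneg : ∀ x ∈ Ioi r, 0 ≤ K * (1+x) ^ (-a) := by
    intro x hx
    have : (0:ℝ) < 1 + x := by simp only [mem_Ioi] at hx; linarith
    positivity
  have hint : IntegrableOn (fun x => K * (1+x) ^ (-a)) (Ioi r) :=
    integrableOn_Ioi_deriv_of_nonneg' hderiv hnonneg htend
  have hval : ∫ x in Ioi r, K * (1+x) ^ (-a) = (K/(a-1)) * (1+r) ^ (1-a) := by
    rw [integral_Ioi_of_hasDerivAt_of_nonneg' hderiv hnonneg htend]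
    simp [hg]
  have hmeas : AEStronglyMeasurable (fun ρ : ℝ => (ρ ^ 2 + 1) ^ (-(a/2)))
      (volume.restrict (Ioi r)) := by
    apply Continuous.aestronglyMeasurable
    have : Continuous (fun ρ : ℝ => ρ ^ 2 + 1) := by continuity
    exact this.rpow_const (fun x => Or.inl (by positivity))
  have hbd : ∀ᵐ x ∂(volume.restrict (Ioi r)),
      ‖(x ^ 2 + 1 : ℝ) ^ (-(a/2))‖ ≤ K * (1+x) ^ (-a) := by
    filter_upwards [ae_restrict_mem measurableSet_Ioi] with x hx
    rw [Real.norm_of_nonneg (by positivity)]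
    exact ptwise (by linarith) (le_of_lt (lt_of_le_of_lt hr hx))
  have hint2 : IntegrableOn (fun ρ : ℝ => (ρ ^ 2 + 1) ^ (-(a/2))) (Ioi r) :=
    Integrable.mono' hint hmeas hbd
  refine ⟨hint2, ?_⟩
  have step1 : ∫ ρ in Ioi r, (ρ ^ 2 + 1) ^ (-(a/2)) ≤ ∫ x in Ioi r, K * (1+x) ^ (-a) := by
    apply setIntegral_mono_on hint2 hint measurableSet_Ioi
    intro x hx
    exact ptwise (by linarith) (le_of_lt (lt_of_le_of_lt hr hx))
  have step2 : (1+r : ℝ) ^ (1-a) ≤ (r ^ 2 + 1) ^ ((1-a)/2) := by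
    have h1r : (0:ℝ) < 1 + r := by linarith
    have hsq : ((1+r)^2 : ℝ) ^ ((1-a)/2) = (1+r) ^ (1-a) := by
      rw [← Real.rpow_two, ← Real.rpow_mul h1r.le]
      congr 1; ring
    rw [← hsq]
    exact Real.rpow_le_rpow_of_nonpos (by positivity) (by nlinarith) (by linarith)
  calc ∫ ρ in Ioi r, (ρ ^ 2 + 1) ^ (-(a/2)) ≤ (K/(a-1)) * (1+r) ^ (1-a) := by
        rw [← hval]; exact step1
    _ ≤ (K/(a-1)) * (r ^ 2 + 1) ^ ((1-a)/2) := by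
        apply mul_le_mul_of_nonneg_left step2 (by positivity)

private lemma half {p q b : ℝ} (hpq : p.HolderConjugate q) (hb : 0 < b)
    (ha : 1 < 2 * (b * q / p)) (f : ℝ → ℝ) (hf : ContDiff ℝ (⊤ : ℕ∞) f)
    (h2f : HasCompactSupport f) (r : ℝ) (hr : 0 ≤ r) :
    |f r| ≤ (2 ^ (b*q/p) / (2*(b*q/p) - 1)) ^ (1/q) *
        (r^2+1) ^ ((1 - 2*(b*q/p))/2 * (1/q)) *
      (∫ ρ : ℝ, |deriv f ρ| ^ p * (ρ^2+1) ^ b) ^ (1/p) := by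
  have hp1 : 1 < p := hpq.lt
  have hp0 : 0 < p := hpq.pos
  have hq0 : 0 < q := hpq.symm.pos
  have hwpos : ∀ x : ℝ, (0:ℝ) < x ^ 2 + 1 := fun x => by positivity
  have hwc : Continuous (fun x : ℝ => x ^ 2 + 1) := by continuity
  have hcf' : Continuous (deriv f) := hf.continuous_deriv (by exact_mod_cast le_top)
  have hcsf' : HasCompactSupport (deriv f) := h2f.deriv
  set u : ℝ → ℝ := fun x => |deriv f x| * (x ^ 2 + 1) ^ (b/p) with hu
  set v : ℝ → ℝ := fun x => (x ^ 2 + 1) ^ (-(b/p)) with hv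
  have hcu : Continuous u :=
    (hcf'.abs).mul (hwc.rpow_const (fun x => Or.inl (hwpos x).ne'))
  have hcv : Continuous v := hwc.rpow_const (fun x => Or.inl (hwpos x).ne')
  have hcsu : HasCompactSupport u := (hcsf'.abs).mul_right
  have hmemu : MemLp u (ENNReal.ofReal p) (volume.restrict (Ioi r)) :=
    (hcu.memLp_of_hasCompactSupport hcsu).restrict _
  -- v^q equals the tail integrand
  have hvq : ∀ x : ℝ, v x ^ q = (x ^ 2 + 1) ^ (-(2*(b*q/p)/2)) := by
    intro x
    rw [hv, ← Real.rpow_mul (hwpos x).le]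
    congr 1; ring
  have tail := tail_bound ha hr
  have hvint : IntegrableOn (fun x : ℝ => v x ^ q) (Ioi r) := by
    have := tail.1
    apply this.congr_fun _ measurableSet_Ioi
    intro x _
    exact (hvq x).symm
  have hofq0 : (ENNReal.ofReal q) ≠ 0 := by
    simp [ENNReal.ofReal_eq_zero, not_le, hq0]
  have hofqt : (ENNReal.ofReal q) ≠ ⊤ := ENNReal.ofReal_ne_top
  have hmemv : MemLp v (ENNReal.ofReal q) (volume.restrict (Ioi r)) := by
    refine (memLp_norm_rpow_iff (q := ENNReal.ofReal q)
      hcv.aestronglyMeasurable hofq0 hofqt).mp ?_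
    rw [ENNReal.div_self hofq0 hofqt, memLp_one_iff_integrable]
    apply hvint.congr_fun _ measurableSet_Ioi
    intro x _
    simp only [ENNReal.toReal_ofReal hq0.le, Real.norm_eq_abs,
      abs_of_nonneg (Real.rpow_nonneg (by positivity : (0:ℝ) ≤ x ^ 2 + 1) _)]
    exact congrArg (· ^ q) (abs_of_nonneg (Real.rpow_nonneg (by positivity : (0:ℝ) ≤ x ^ 2 + 1) (-(b/p)))).symm
  -- FTC
  have hftc : ∫ x in Ioi r, deriv f x = - f r :=
    h2f.integral_Ioi_deriv_eq (hf.of_le (by exact_mod_cast le_top)) r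
  have step0 : |f r| ≤ ∫ x in Ioi r, |deriv f x| := by
    have := norm_integral_le_integral_norm (μ := volume.restrict (Ioi r)) (deriv f)
    rw [hftc] at this
    simpa using this
  have huv : ∀ x : ℝ, u x * v x = |deriv f x| := by
    intro x
    rw [hu, hv, mul_assoc, ← Real.rpow_add (hwpos x)]
    simp
  have step1 : ∫ x in Ioi r, |deriv f x| = ∫ x in Ioi r, u x * v x :=
    integral_congr_ae (Eventually.of_forall (fun x => (huv x).symm))
  have holder := integral_mul_le_Lp_mul_Lq_of_nonneg hpq
    (Eventually.of_forall (fun x => by positivity : ∀ x, (0:ℝ) ≤ u x))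
    (Eventually.of_forall (fun x => by positivity : ∀ x, (0:ℝ) ≤ v x))
    hmemu hmemv
  -- bound the u-factor
  have hup : ∀ x : ℝ, u x ^ p = |deriv f x| ^ p * (x ^ 2 + 1) ^ b := by
    intro x
    rw [hu, Real.mul_rpow (abs_nonneg _) (by positivity),
      ← Real.rpow_mul (hwpos x).le, div_mul_cancel₀ _ hp0.ne']
  have hintA : Integrable (fun x : ℝ => |deriv f x| ^ p * (x ^ 2 + 1) ^ b) := by
    apply Continuous.integrable_of_hasCompactSupport
    · exact ((hcf'.abs).rpow_const (fun x => Or.inr hp0.le)).mul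
        (hwc.rpow_const (fun x => Or.inl (hwpos x).ne'))
    · have h1 : HasCompactSupport (fun x : ℝ => |deriv f x| ^ p) :=
        hcsf'.comp_left (g := fun t : ℝ => |t| ^ p)
          (by simp [Real.zero_rpow hp0.ne'])
      exact h1.mul_right
  have hAle : ∫ x in Ioi r, u x ^ p ≤ ∫ ρ : ℝ, |deriv f ρ| ^ p * (ρ^2+1) ^ b := by
    have e1 : ∫ x in Ioi r, u x ^ p
        = ∫ x in Ioi r, |deriv f x| ^ p * (x ^ 2 + 1) ^ b :=
      integral_congr_ae (Eventually.of_forall (fun x => hup x))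
    rw [e1]
    exact setIntegral_le_integral hintA
      (Eventually.of_forall (fun x => by positivity))
  have hA0 : (0:ℝ) ≤ ∫ x in Ioi r, u x ^ p :=
    integral_nonneg (fun x => by positivity)
  have hufac : (∫ x in Ioi r, u x ^ p) ^ (1/p)
      ≤ (∫ ρ : ℝ, |deriv f ρ| ^ p * (ρ^2+1) ^ b) ^ (1/p) :=
    Real.rpow_le_rpow hA0 hAle (by positivity)
  -- bound the v-factor
  have hBle : ∫ x in Ioi r, v x ^ q
      ≤ (2 ^ (b*q/p) / (2*(b*q/p) - 1)) * (r ^ 2 + 1) ^ ((1 - 2*(b*q/p))/2) := by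
    have e1 : ∫ x in Ioi r, v x ^ q
        = ∫ x in Ioi r, (x ^ 2 + 1) ^ (-(2*(b*q/p)/2)) :=
      integral_congr_ae (Eventually.of_forall (fun x => hvq x))
    rw [e1]
    have := tail.2
    have h2 : (2:ℝ) ^ (2*(b*q/p)/2) = 2 ^ (b*q/p) := by norm_num
    calc ∫ x in Ioi r, (x ^ 2 + 1 : ℝ) ^ (-(2*(b*q/p)/2))
        ≤ (2 ^ (2*(b*q/p)/2) / (2*(b*q/p) - 1)) * (r ^ 2 + 1) ^ ((1 - 2*(b*q/p))/2) := this
      _ = (2 ^ (b*q/p) / (2*(b*q/p) - 1)) * (r ^ 2 + 1) ^ ((1 - 2*(b*q/p))/2) := by rw [h2]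
  have hB0 : (0:ℝ) ≤ ∫ x in Ioi r, v x ^ q :=
    integral_nonneg (fun x => by positivity)
  have hKpos : (0:ℝ) < 2 ^ (b*q/p) / (2*(b*q/p) - 1) := by
    apply div_pos (by positivity); linarith
  have hvfac : (∫ x in Ioi r, v x ^ q) ^ (1/q)
      ≤ (2 ^ (b*q/p) / (2*(b*q/p) - 1)) ^ (1/q) *
          (r^2+1) ^ ((1 - 2*(b*q/p))/2 * (1/q)) := by
    calc (∫ x in Ioi r, v x ^ q) ^ (1/q)
        ≤ ((2 ^ (b*q/p) / (2*(b*q/p) - 1)) * (r ^ 2 + 1) ^ ((1 - 2*(b*q/p))/2)) ^ (1/q) :=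
          Real.rpow_le_rpow hB0 hBle (by positivity)
      _ = (2 ^ (b*q/p) / (2*(b*q/p) - 1)) ^ (1/q) *
          (r^2+1) ^ ((1 - 2*(b*q/p))/2 * (1/q)) := by
          rw [Real.mul_rpow hKpos.le (by positivity),
            ← Real.rpow_mul (hwpos r).le]
  -- combine
  calc |f r| ≤ ∫ x in Ioi r, u x * v x := by rw [← step1]; exact step0
    _ ≤ (∫ x in Ioi r, u x ^ p) ^ (1/p) * (∫ x in Ioi r, v x ^ q) ^ (1/q) := holder
    _ ≤ (∫ ρ : ℝ, |deriv f ρ| ^ p * (ρ^2+1) ^ b) ^ (1/p) *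
        ((2 ^ (b*q/p) / (2*(b*q/p) - 1)) ^ (1/q) *
          (r^2+1) ^ ((1 - 2*(b*q/p))/2 * (1/q))) := by
        apply mul_le_mul hufac hvfac (Real.rpow_nonneg hB0 _)
          (Real.rpow_nonneg (integral_nonneg (fun x => by positivity)) _)
    _ = (2 ^ (b*q/p) / (2*(b*q/p) - 1)) ^ (1/q) *
        (r^2+1) ^ ((1 - 2*(b*q/p))/2 * (1/q)) *
      (∫ ρ : ℝ, |deriv f ρ| ^ p * (ρ^2+1) ^ b) ^ (1/p) := by ring

private lemma main_aux {p q b e ip : ℝ} (hpq : p.HolderConjugate q) (hb : 0 < b)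
    (ha : 1 < 2 * (b * q / p)) (he : e = (1 - 2*(b*q/p))/2 * (1/q)) (hip : ip = 1/p) :
    ∃ C : ℝ, 0 < C ∧ ∀ f : ℝ → ℝ, ContDiff ℝ (⊤ : ℕ∞) f → HasCompactSupport f → ∀ r : ℝ,
      |f r| ≤ C * (r^2+1) ^ e * (∫ ρ : ℝ, |deriv f ρ| ^ p * (ρ^2+1) ^ b) ^ ip := by
  subst he hip
  refine ⟨(2 ^ (b*q/p) / (2*(b*q/p) - 1)) ^ (1/q), ?_, ?_⟩
  · have h0 : (0:ℝ) < 2 ^ (b*q/p) / (2*(b*q/p) - 1) :=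
      div_pos (by positivity) (by linarith)
    positivity
  intro f hf h2f r
  rcases le_or_gt 0 r with hr | hr
  · exact half hpq hb ha f hf h2f r hr
  · set g : ℝ → ℝ := fun x => f (-x) with hgdef
    have hg : ContDiff ℝ (⊤ : ℕ∞) g := hf.comp contDiff_neg
    have h2g : HasCompactSupport g := h2f.comp_homeomorph (Homeomorph.neg ℝ)
    have key := half hpq hb ha g hg h2g (-r) (by linarith)
    have hfg : f r = g (-r) := by simp [hgdef]
    have hsq : ((-r)^2 : ℝ) = r^2 := by ring
    have hint : (∫ ρ : ℝ, |deriv g ρ| ^ p * (ρ^2+1) ^ b)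
        = ∫ ρ : ℝ, |deriv f ρ| ^ p * (ρ^2+1) ^ b := by
      have h1 : ∀ ρ : ℝ, |deriv g ρ| ^ p * (ρ^2+1) ^ b
          = (fun y : ℝ => |deriv f y| ^ p * (y^2+1) ^ b) (-ρ) := by
        intro ρ
        have hd : deriv g ρ = -deriv f (-ρ) := deriv_comp_neg f ρ
        simp only [hd, abs_neg]
        norm_num
      calc (∫ ρ : ℝ, |deriv g ρ| ^ p * (ρ^2+1) ^ b)
          = ∫ ρ : ℝ, (fun y : ℝ => |deriv f y| ^ p * (y^2+1) ^ b) (-ρ) :=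
            integral_congr_ae (.of_forall h1)
        _ = _ := by
            rw [show (fun ρ : ℝ => (fun y : ℝ => |deriv f y| ^ p * (y^2+1) ^ b) (-ρ))
              = fun ρ : ℝ => |deriv f (-ρ)| ^ p * ((-ρ)^2+1) ^ b from rfl]
            exact integral_neg_eq_self (fun y : ℝ => |deriv f y| ^ p * (y^2+1) ^ b) volume
    rw [hfg, ← hint, ← hsq]
    exact key


/-- Weighted `L^∞` embeddings on the d-dimensional wormhole, `d ≥ 7`:
`|f(r)| ≤ C ⟨r⟩^{−2(d−4)/3} ‖f'‖_{L^{m₀}(⟨ρ⟩^{d−1}dρ)}` with `m₀ = 3d/(2d−5)`, and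
`|f(r)| ≤ C ⟨r⟩^{−(d−4)} ‖f'‖_{L^{m₁}(⟨ρ⟩^{d−1}dρ)}` with `m₁ = d/(d−3)`. -/
theorem stmt6 (d : ℕ) (hd : 7 ≤ d) :
    ∃ C : ℝ, 0 < C ∧
      ∀ f : ℝ → ℝ, ContDiff ℝ (⊤ : ℕ∞) f → HasCompactSupport f → ∀ r : ℝ,
        (|f r| ≤ C * (r ^ 2 + 1) ^ (-((d : ℝ) - 4) / 3) *
          (∫ ρ : ℝ, |deriv f ρ| ^ (3 * (d : ℝ) / (2 * (d : ℝ) - 5))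
              * (ρ ^ 2 + 1) ^ (((d : ℝ) - 1) / 2)) ^ ((2 * (d : ℝ) - 5) / (3 * (d : ℝ)))) ∧
        (|f r| ≤ C * (r ^ 2 + 1) ^ (-((d : ℝ) - 4) / 2) *
          (∫ ρ : ℝ, |deriv f ρ| ^ ((d : ℝ) / ((d : ℝ) - 3))
              * (ρ ^ 2 + 1) ^ (((d : ℝ) - 1) / 2)) ^ (((d : ℝ) - 3) / (d : ℝ))) := by
  have hD : (7:ℝ) ≤ (d:ℝ) := by exact_mod_cast hd
  have hd0 : (d:ℝ) ≠ 0 := by linarith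
  -- first exponent pair
  have hpq0 : (3 * (d:ℝ) / (2 * (d:ℝ) - 5)).HolderConjugate (3 * (d:ℝ) / ((d:ℝ) + 5)) := by
    rw [Real.holderConjugate_iff]
    constructor
    · rw [lt_div_iff₀ (by linarith)]; linarith
    · field_simp
      ring
  have ha0 : 1 < 2 * ((((d:ℝ) - 1) / 2) * (3 * (d:ℝ) / ((d:ℝ) + 5)) /
      (3 * (d:ℝ) / (2 * (d:ℝ) - 5))) := by
    have he : 2 * ((((d:ℝ) - 1) / 2) * (3 * (d:ℝ) / ((d:ℝ) + 5)) /
        (3 * (d:ℝ) / (2 * (d:ℝ) - 5))) = ((d:ℝ) - 1) * (2 * (d:ℝ) - 5) / ((d:ℝ) + 5) := by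
      field_simp
    rw [he, lt_div_iff₀ (by linarith)]
    nlinarith
  have he0 : -((d : ℝ) - 4) / 3 = (1 - 2 * ((((d:ℝ) - 1) / 2) * (3 * (d:ℝ) / ((d:ℝ) + 5)) /
      (3 * (d:ℝ) / (2 * (d:ℝ) - 5)))) / 2 * (1 / (3 * (d:ℝ) / ((d:ℝ) + 5))) := by
    field_simp
    ring
  have hip0 : (2 * (d : ℝ) - 5) / (3 * (d : ℝ)) = 1 / (3 * (d:ℝ) / (2 * (d:ℝ) - 5)) := by
    field_simp
  obtain ⟨C₀, hC₀, H₀⟩ := main_aux (b := ((d:ℝ) - 1) / 2) hpq0 (by linarith) ha0 he0 hip0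
  -- second exponent pair
  have hpq1 : ((d:ℝ) / ((d:ℝ) - 3)).HolderConjugate ((d:ℝ) / 3) := by
    rw [Real.holderConjugate_iff]
    constructor
    · rw [lt_div_iff₀ (by linarith)]; linarith
    · field_simp
      ring
  have ha1 : 1 < 2 * ((((d:ℝ) - 1) / 2) * ((d:ℝ) / 3) / ((d:ℝ) / ((d:ℝ) - 3))) := by
    have he : 2 * ((((d:ℝ) - 1) / 2) * ((d:ℝ) / 3) / ((d:ℝ) / ((d:ℝ) - 3)))
        = ((d:ℝ) - 1) * ((d:ℝ) - 3) / 3 := by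
      field_simp
    rw [he, lt_div_iff₀ (by norm_num)]
    nlinarith
  have he1 : -((d : ℝ) - 4) / 2 = (1 - 2 * ((((d:ℝ) - 1) / 2) * ((d:ℝ) / 3) /
      ((d:ℝ) / ((d:ℝ) - 3)))) / 2 * (1 / ((d:ℝ) / 3)) := by
    field_simp
    ring
  have hip1 : ((d : ℝ) - 3) / (d : ℝ) = 1 / ((d:ℝ) / ((d:ℝ) - 3)) := by
    field_simp
  obtain ⟨C₁, hC₁, H₁⟩ := main_aux (b := ((d:ℝ) - 1) / 2) hpq1 (by linarith) ha1 he1 hip1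
  refine ⟨max C₀ C₁, lt_max_of_lt_left hC₀, ?_⟩
  intro f hf h2f r
  constructor
  · refine le_trans (H₀ f hf h2f r) ?_
    have h1 : (0:ℝ) ≤ (r ^ 2 + 1) ^ (-((d : ℝ) - 4) / 3) := by positivity
    have h2 : (0:ℝ) ≤ (∫ ρ : ℝ, |deriv f ρ| ^ (3 * (d : ℝ) / (2 * (d : ℝ) - 5))
        * (ρ ^ 2 + 1) ^ (((d : ℝ) - 1) / 2)) ^ ((2 * (d : ℝ) - 5) / (3 * (d : ℝ))) :=
      Real.rpow_nonneg (integral_nonneg (fun x => by positivity)) _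
    exact mul_le_mul_of_nonneg_right
      (mul_le_mul_of_nonneg_right (le_max_left _ _) h1) h2
  · refine le_trans (H₁ f hf h2f r) ?_
    have h1 : (0:ℝ) ≤ (r ^ 2 + 1) ^ (-((d : ℝ) - 4) / 2) := by positivity
    have h2 : (0:ℝ) ≤ (∫ ρ : ℝ, |deriv f ρ| ^ ((d : ℝ) / ((d : ℝ) - 3))
        * (ρ ^ 2 + 1) ^ (((d : ℝ) - 1) / 2)) ^ (((d : ℝ) - 3) / (d : ℝ)) :=
      Real.rpow_nonneg (integral_nonneg (fun x => by positivity)) _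
    exact mul_le_mul_of_nonneg_right
      (mul_le_mul_of_nonneg_right (le_max_right _ _) h1) h2
end
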